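/- arXiv:2404.04646 — 2 statements merged into one kernel-verified Lean document; each statement's English description precedes it below -/
import Mathlib

section
/- Let f_5(x) = C(x,5) - 2·C(x,4), f_4(x) = C(x,4) - 2·C(x,3), f_3(x) = C(x,3) - 2·C(x,2). For every integer n ≥ 13, f_5(n) - (f_5(n-1) + f_4(n-2) + f_3(n-3)) = (n-3)(n-8)/2 ≥ 0. -/
def f7_5 (x : ℕ) : ℤ := (Nat.choose x 5 : ℤ) - 2 * Nat.choose x 4
def f7_4 (x : ℕ) : ℤ := (Nat.choose x 4 : ℤ) - 2 * Nat.choose x 3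
def f7_3 (x : ℕ) : ℤ := (Nat.choose x 3 : ℤ) - 2 * Nat.choose x 2

lemma c1 (n : ℕ) : (Nat.choose n 1 : ℤ) = n := by
  simp

lemma c2 (n : ℕ) : (2 : ℤ) * Nat.choose n 2 = n * (n - 1) := by
  induction n with
  | zero => simp
  | succ k ih =>
    rw [Nat.choose_succ_succ]
    push_cast
    push_cast at ih
    have := c1 k
    linarith [ih, this]

lemma c3 (n : ℕ) : (6 : ℤ) * Nat.choose n 3 = n * (n - 1) * (n - 2) := by
  induction n with
  | zero => simp
  | succ k ih =>
    rw [Nat.choose_succ_succ]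
    push_cast
    have h2 := c2 k
    push_cast at ih h2 ⊢
    nlinarith [ih, h2]

lemma c4 (n : ℕ) : (24 : ℤ) * Nat.choose n 4 = n * (n - 1) * (n - 2) * (n - 3) := by
  induction n with
  | zero => simp
  | succ k ih =>
    rw [Nat.choose_succ_succ]
    push_cast
    have h3 := c3 k
    push_cast at ih h3 ⊢
    nlinarith [ih, h3]

lemma c5 (n : ℕ) : (120 : ℤ) * Nat.choose n 5 = n * (n - 1) * (n - 2) * (n - 3) * (n - 4) := by
  induction n with
  | zero => simp
  | succ k ih =>
    rw [Nat.choose_succ_succ]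
    push_cast
    have h4 := c4 k
    push_cast at ih h4 ⊢
    nlinarith [ih, h4]

theorem stmt_7 (n : ℕ) (hn : 13 ≤ n) :
    2 * (f7_5 n - (f7_5 (n - 1) + f7_4 (n - 2) + f7_3 (n - 3)))
      = ((n : ℤ) - 3) * ((n : ℤ) - 8) ∧
    0 ≤ f7_5 n - (f7_5 (n - 1) + f7_4 (n - 2) + f7_3 (n - 3)) := by
  obtain ⟨m, rfl⟩ := Nat.exists_eq_add_of_le hn
  have e1 : 13 + m - 1 = 12 + m := by omega
  have e2 : 13 + m - 2 = 11 + m := by omega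
  have e3 : 13 + m - 3 = 10 + m := by omega
  rw [e1, e2, e3]
  have heq : 2 * (f7_5 (13 + m) - (f7_5 (12 + m) + f7_4 (11 + m) + f7_3 (10 + m)))
      = (((13 + m : ℕ) : ℤ) - 3) * (((13 + m : ℕ) : ℤ) - 8) := by
    have h120 : (120 : ℤ) * (2 * (f7_5 (13 + m) - (f7_5 (12 + m) + f7_4 (11 + m) + f7_3 (10 + m))))
        = 120 * ((((13 + m : ℕ) : ℤ) - 3) * (((13 + m : ℕ) : ℤ) - 8)) := by
      unfold f7_5 f7_4 f7_3
      push_cast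
      linear_combination (norm := (push_cast; ring1)) 2 * c5 (13 + m) - 20 * c4 (13 + m) - 2 * c5 (12 + m)
        + 20 * c4 (12 + m) - 10 * c4 (11 + m) + 80 * c3 (11 + m)
        - 40 * c3 (10 + m) + 240 * c2 (10 + m)
    exact mul_left_cancel₀ (by norm_num) h120
  refine ⟨heq, ?_⟩
  push_cast at heq
  nlinarith [heq, Nat.cast_nonneg (α := ℤ) m]
end

section
/- Let n ≥ 8 be an integer and let α_2, α_3 be nonnegative integers satisfying the following Kruskal–Katona-type condition: either α_2 ≥ C(n,2), or there exists n_2 < n with α_2 = C(n_2,2) and α_3 ≤ C(n_2,3), or there exist 1 ≤ n_1 < n_2 < n with α_2 = C(n_2,2) + C(n_1,1) and α_3 ≤ C(n_2,3) + C(n_1,2). If moreover α_3 ≤ C(n,3), then 3·α_3 - 4·α_2 ≤ 3·C(n,3) - 4·C(n,2) = n(n-1)(n-6)/2. -/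
set_option maxHeartbeats 1000000

lemma c2_cast (m : ℕ) : (Nat.choose m 2 : ℤ) * 2 = m * (m - 1) := by
  induction m with
  | zero => simp
  | succ k ih =>
    rw [Nat.choose_succ_succ]
    push_cast
    push_cast at ih
    rw [Nat.choose_one_right]
    push_cast
    ring_nf
    ring_nf at ih
    linarith

lemma c3_cast (m : ℕ) : (Nat.choose m 3 : ℤ) * 6 = m * (m - 1) * (m - 2) := by
  induction m with
  | zero => simp
  | succ k ih =>
    rw [Nat.choose_succ_succ]
    push_cast
    have h2 := c2_cast k
    nlinarith [ih, h2]

theorem stmt_10 (n : ℕ) (hn : 8 ≤ n) (α₂ α₃ : ℤ) (hα₂ : 0 ≤ α₂) (hα₃ : 0 ≤ α₃)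
    (hKK : (Nat.choose n 2 : ℤ) ≤ α₂ ∨
      (∃ n₂ : ℕ, n₂ < n ∧ α₂ = Nat.choose n₂ 2 ∧ α₃ ≤ Nat.choose n₂ 3) ∨
      (∃ n₁ n₂ : ℕ, 1 ≤ n₁ ∧ n₁ < n₂ ∧ n₂ < n ∧
        α₂ = Nat.choose n₂ 2 + Nat.choose n₁ 1 ∧
        α₃ ≤ Nat.choose n₂ 3 + Nat.choose n₁ 2))
    (h3 : α₃ ≤ Nat.choose n 3) :
    3 * α₃ - 4 * α₂ ≤ 3 * Nat.choose n 3 - 4 * Nat.choose n 2 ∧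
    2 * (3 * (Nat.choose n 3 : ℤ) - 4 * Nat.choose n 2)
      = (n : ℤ) * ((n : ℤ) - 1) * ((n : ℤ) - 6) := by
  have hN2 := c2_cast n
  have hN3 := c3_cast n
  have hNcast : (8 : ℤ) ≤ (n : ℤ) := by exact_mod_cast hn
  constructor
  · rcases hKK with h | ⟨n₂, hlt, he2, he3⟩ | ⟨n₁, n₂, h1, h12, h2n, he2, he3⟩
    · linarith
    · have ha2 := c2_cast n₂
      have ha3 := c3_cast n₂
      have hacast : (n₂ : ℤ) ≤ (n : ℤ) - 1 := by
        have : (n₂ : ℤ) < n := by exact_mod_cast hlt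
        linarith
      have ha0 : (0 : ℤ) ≤ n₂ := Int.natCast_nonneg _
      set a := (n₂ : ℤ)
      set N := (n : ℤ)
      -- need a(a-1)(a-6) ≤ N(N-1)(N-6)
      have key : a * (a - 1) * (a - 6) ≤ N * (N - 1) * (N - 6) := by
        nlinarith [mul_nonneg ha0 (sub_nonneg.mpr hacast), sq_nonneg (a - 3),
          mul_nonneg (mul_nonneg ha0 ha0) (sub_nonneg.mpr hacast),
          mul_nonneg (sub_nonneg.mpr hacast) (sub_nonneg.mpr hacast)]
      linarith
    · have ha2 := c2_cast n₂
      have ha3 := c3_cast n₂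
      have hb2 := c2_cast n₁
      rw [Nat.choose_one_right] at he2
      have hbcast : (1 : ℤ) ≤ (n₁ : ℤ) := by exact_mod_cast h1
      have hab : (n₁ : ℤ) ≤ (n₂ : ℤ) - 1 := by
        have : (n₁ : ℤ) < n₂ := by exact_mod_cast h12
        linarith
      have hacast : (n₂ : ℤ) ≤ (n : ℤ) - 1 := by
        have : (n₂ : ℤ) < n := by exact_mod_cast h2n
        linarith
      set a := (n₂ : ℤ)
      set b := (n₁ : ℤ)
      set N := (n : ℤ)
      -- need a(a-1)(a-6) + 3b(b-1) - 8b ≤ N(N-1)(N-6)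
      have ha2' : (2 : ℤ) ≤ a := by linarith
      have stepA : a * (a - 1) * (a - 6) ≤ (N - 1) * (N - 2) * (N - 7) := by
        rcases le_or_gt a 6 with h6 | h6
        · have hle : a * (a - 1) * (a - 6) ≤ 0 :=
            mul_nonpos_of_nonneg_of_nonpos
              (mul_nonneg (by linarith) (by linarith)) (by linarith)
          have hge : (0:ℤ) ≤ (N - 1) * (N - 2) * (N - 7) :=
            mul_nonneg (mul_nonneg (by linarith) (by linarith)) (by linarith)
          linarith
        · have hMa : (0:ℤ) ≤ (N - 1) - a := by linarith
          have hfacid : (N - 1) * (N - 2) * (N - 7) - a * (a - 1) * (a - 6)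
              = ((N - 1) - a) *
                ((N - 1) * (N - 1) + (N - 1) * a + a * a - 7 * (N - 1) - 7 * a + 6) := by
            ring
          have h1' : (0:ℤ) ≤ (a - 7) * a :=
            mul_nonneg (by linarith) (by linarith)
          have h2' : (0:ℤ) ≤ ((N - 1) - 7) * (N - 1) :=
            mul_nonneg (by linarith) (by linarith)
          have h3' : (0:ℤ) ≤ (N - 1) * a := mul_nonneg (by linarith) (by linarith)
          have hfac : (0:ℤ) ≤ (N - 1) * (N - 1) + (N - 1) * a + a * a
              - 7 * (N - 1) - 7 * a + 6 := by nlinarith [h1', h2', h3']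
          nlinarith [mul_nonneg hMa hfac, hfacid]
      have stepB : b * (3 * b - 11) ≤ (N - 2) * (3 * N - 17) := by
        rcases le_or_gt b 3 with h4 | h4
        · have hle : b * (3 * b - 11) ≤ 0 :=
            mul_nonpos_of_nonneg_of_nonpos (by linarith) (by linarith)
          have hge : (0:ℤ) ≤ (N - 2) * (3 * N - 17) :=
            mul_nonneg (by linarith) (by linarith)
          linarith
        · have hNb : (0:ℤ) ≤ (N - 2) - b := by linarith
          nlinarith [mul_nonneg hNb (by linarith : (0:ℤ) ≤ 3 * ((N - 2) + b) - 11)]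
      have hid : (N - 1) * (N - 2) * (N - 7) + (N - 2) * (3 * N - 17) + (6 * N - 20)
          = N * (N - 1) * (N - 6) := by ring
      have key : a * (a - 1) * (a - 6) + 3 * (b * (b - 1)) - 8 * b
          ≤ N * (N - 1) * (N - 6) := by nlinarith [stepA, stepB, hid, hNcast]
      push_cast at he2 he3
      linarith
  · linarith
end
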